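/- Let λ > 0 be a real number, R₀ > 0, let h be a holomorphic function on the open disc {z ∈ ℂ : |z| < R₀} with h(0) ≠ 0, let −π < α ≤ β < π, and define g(z) := z^λ · h(z), where z^λ denotes the principal branch. Then there exist r ∈ (0, R₀) and C > 0 with the following property. Let μ : [0,1] → ℂ be any continuously differentiable path with nowhere-vanishing derivative such that 0 < |μ(s)| ≤ r and α ≤ arg μ(s) ≤ β for all s, set ‖μ‖_g := max_s |g(μ(s))| and E_g := sup_s [[(g∘μ)′(s)/(i·g(μ(s)))]] ∈ [0, +∞]. Then: (i) max_s |μ(s)| ≤ C·(‖μ‖_g)^{1/λ}; and (ii) if E_g + C·(‖μ‖_g)^{1/λ} < π/2, then for every s one has [[μ′(s)/(i·μ(s))]] ≤ E_g + C·(‖μ‖_g)^{1/λ}; in other words, the rugosity of μ is controlled by the rugosity and the size of the image path g∘μ. -/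

import Mathlib

lemma rug_abs_arg_le_of_re_pos {z : ℂ} (hz : 0 < z.re) : |z.arg| ≤ |z.im| / z.re := by
  have h2 : |z.arg| < Real.pi / 2 := Complex.abs_arg_lt_pi_div_two_iff.2 (Or.inl hz)
  refine (Real.le_tan (abs_nonneg _) h2).trans ?_
  have habs : |z.im| / z.re = |z.im / z.re| := by rw [abs_div, abs_of_pos hz]
  rw [habs, ← Complex.tan_arg]
  rcases abs_cases z.arg with ⟨he, _⟩ | ⟨he, _⟩
  · rw [he]; exact le_abs_self _
  · rw [he, Real.tan_neg]; exact neg_le_abs _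

lemma rug_abs_arg_one_add_le {δ : ℂ} (hδ : ‖δ‖ ≤ 1/2) :
    |Complex.arg (1 + δ)| ≤ 2 * ‖δ‖ := by
  have hre : (1/2 : ℝ) ≤ (1 + δ).re := by
    have h1 := abs_le.1 ((Complex.abs_re_le_norm δ).trans hδ)
    simp only [Complex.add_re, Complex.one_re]
    linarith [h1.1]
  have hre0 : 0 < (1 + δ).re := by linarith
  refine (rug_abs_arg_le_of_re_pos hre0).trans ?_
  have him : |(1 + δ).im| ≤ ‖δ‖ := by
    simp only [Complex.add_im, Complex.one_im, zero_add]
    exact Complex.abs_im_le_norm δ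
  calc |(1 + δ).im| / (1 + δ).re ≤ ‖δ‖ / (1/2) :=
        div_le_div₀ (norm_nonneg δ) him (by norm_num) hre
    _ = 2 * ‖δ‖ := by ring

/-- The rugosity bracket `[[z]]`: it equals `|arg z|` if `|arg z| < π/2`, and `+∞` otherwise. -/
noncomputable def rugosityBracket (z : ℂ) : ENNReal :=
  if |Complex.arg z| < Real.pi / 2 then ENNReal.ofReal |Complex.arg z| else ⊤

/-- For `g(z) = z^λ·h(z)` with `λ > 0`, `h` holomorphic near `0`, `h(0) ≠ 0`, there are
`r ∈ (0,R₀)` and `C > 0` such that for any `C¹` path `μ` in the punctured sector of radius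
`r` one has `‖μ‖ ≤ C·(‖μ‖_g)^{1/λ}` and, provided `e_g(μ) + C·(‖μ‖_g)^{1/λ} < π/2`, the
rugosity of `μ` is bounded by the rugosity of `g ∘ μ` plus `C·(‖μ‖_g)^{1/λ}`. -/
theorem rugosity_estimate_backward
    (l : ℝ) (hl : 0 < l) (R₀ : ℝ) (hR₀ : 0 < R₀)
    (h : ℂ → ℂ) (hh : DifferentiableOn ℂ h (Metric.ball 0 R₀)) (hh0 : h 0 ≠ 0)
    (α β : ℝ) (hα : -Real.pi < α) (hαβ : α ≤ β) (hβ : β < Real.pi)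
    (g : ℂ → ℂ) (hg : ∀ z : ℂ, g z = z ^ (l : ℂ) * h z) :
    ∃ r ∈ Set.Ioo (0 : ℝ) R₀, ∃ C > (0 : ℝ),
      ∀ (μ μ' : ℝ → ℂ) (Mg : ℝ),
        (∀ s ∈ Set.Icc (0 : ℝ) 1, HasDerivWithinAt μ (μ' s) (Set.Icc (0 : ℝ) 1) s) →
        ContinuousOn μ' (Set.Icc (0 : ℝ) 1) →
        (∀ s ∈ Set.Icc (0 : ℝ) 1, μ' s ≠ 0) →
        (∀ s ∈ Set.Icc (0 : ℝ) 1, 0 < ‖μ s‖ ∧ ‖μ s‖ ≤ r) →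
        (∀ s ∈ Set.Icc (0 : ℝ) 1, α ≤ Complex.arg (μ s) ∧ Complex.arg (μ s) ≤ β) →
        IsGreatest ((fun s => ‖g (μ s)‖) '' Set.Icc (0 : ℝ) 1) Mg →
        (∀ s ∈ Set.Icc (0 : ℝ) 1, ‖μ s‖ ≤ C * Mg ^ (1 / l)) ∧
        ((⨆ s : Set.Icc (0 : ℝ) 1,
              rugosityBracket
                (derivWithin (g ∘ μ) (Set.Icc (0 : ℝ) 1) s / (Complex.I * g (μ s)))) +
              ENNReal.ofReal (C * Mg ^ (1 / l)) < ENNReal.ofReal (Real.pi / 2) →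
          ∀ s ∈ Set.Icc (0 : ℝ) 1,
            rugosityBracket (μ' s / (Complex.I * μ s)) ≤
              (⨆ s : Set.Icc (0 : ℝ) 1,
                rugosityBracket
                  (derivWithin (g ∘ μ) (Set.Icc (0 : ℝ) 1) s / (Complex.I * g (μ s)))) +
                ENNReal.ofReal (C * Mg ^ (1 / l))) := by
  have h0abs : 0 < ‖h 0‖ := by
    simpa [norm_pos_iff] using hh0
  set m : ℝ := ‖h 0‖ / 2 with hm_def
  have hm0 : 0 < m := by positivity
  have hball0 : (0 : ℂ) ∈ Metric.ball (0 : ℂ) R₀ := by simp [hR₀]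
  have hcont : ContinuousAt h 0 :=
    (hh.differentiableAt (Metric.isOpen_ball.mem_nhds hball0)).continuousAt
  obtain ⟨ε, hε0, hε⟩ := Metric.continuousAt_iff.1 hcont m hm0
  set r₁ : ℝ := min (ε / 2) (R₀ / 2) with hr₁_def
  have hr₁0 : 0 < r₁ := lt_min (by linarith) (by linarith)
  have hr₁R : r₁ < R₀ := (min_le_right _ _).trans_lt (by linarith)
  have hr₁ε : r₁ < ε := (min_le_left _ _).trans_lt (by linarith)
  have hlow : ∀ z : ℂ, ‖z‖ ≤ r₁ → m ≤ ‖h z‖ := by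
    intro z hz
    have hd : dist z 0 < ε := by
      rw [Complex.dist_eq, sub_zero]; exact hz.trans_lt hr₁ε
    have := hε hd
    rw [Complex.dist_eq] at this
    have : ‖h 0‖ - ‖h z‖ ≤ ‖h z - h 0‖ := by
      have h1 := norm_sub_norm_le (h 0) (h z)
      calc ‖h 0‖ - ‖h z‖ ≤ ‖h 0 - h z‖ := h1
        _ = ‖h z - h 0‖ := by rw [← norm_neg, neg_sub]
    have h2 : ‖h z - h 0‖ < m := by
      simpa [Complex.dist_eq] using hε hd
    have : ‖h 0‖ - ‖h z‖ < m := lt_of_le_of_lt this h2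
    have hm2 : ‖h 0‖ = 2 * m := by rw [hm_def]; ring
    linarith
  -- bound for deriv h on closed ball of radius r₁
  have han : AnalyticOnNhd ℂ h (Metric.ball 0 R₀) := hh.analyticOnNhd Metric.isOpen_ball
  have hdc : ContinuousOn (deriv h) (Metric.ball 0 R₀) :=
    han.deriv.continuousOn
  have hsub : Metric.closedBall (0 : ℂ) r₁ ⊆ Metric.ball 0 R₀ :=
    Metric.closedBall_subset_ball hr₁R
  obtain ⟨K₀, hK₀⟩ :=
    (isCompact_closedBall (0 : ℂ) r₁).exists_bound_of_continuousOn (hdc.mono hsub)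
  set K : ℝ := max K₀ 1 with hK_def
  have hK1 : (1 : ℝ) ≤ K := le_max_right _ _
  have hK0 : (0 : ℝ) < K := lt_of_lt_of_le one_pos hK1
  have hKb : ∀ z : ℂ, ‖z‖ ≤ r₁ → ‖deriv h z‖ ≤ K := by
    intro z hz
    have := hK₀ z (by simpa [Metric.mem_closedBall, Complex.dist_eq] using hz)
    exact le_trans (by simpa using this) (le_max_left _ _)
  set r : ℝ := min r₁ (l * m / (2 * K)) with hr_def
  have hr0 : 0 < r := lt_min hr₁0 (by positivity)
  have hrR : r < R₀ := (min_le_left _ _).trans_lt hr₁R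
  have hrr₁ : r ≤ r₁ := min_le_left _ _
  have hrK : r ≤ l * m / (2 * K) := min_le_right _ _
  set C₀ : ℝ := (1 / m) ^ (1 / l) with hC₀_def
  have hC₀0 : 0 < C₀ := Real.rpow_pos_of_pos (by positivity) _
  set C : ℝ := C₀ * (1 + 2 * K / (m * l)) with hC_def
  have hfac1 : (1 : ℝ) ≤ 1 + 2 * K / (m * l) := by
    have : 0 ≤ 2 * K / (m * l) := by positivity
    linarith
  have hC0 : 0 < C := by positivity
  have hC₀C : C₀ ≤ C := le_mul_of_one_le_right hC₀0.le hfac1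
  have hKC : C₀ * (2 * K / (m * l)) ≤ C := by
    rw [hC_def]; nlinarith [hC₀0.le]
  refine ⟨r, ⟨hr0, hrR⟩, C, hC0, ?_⟩
  intro μ μ' Mg hμd hμ'c hμ'0 hμr hμarg hMg
  have hMg0 : 0 ≤ Mg := by
    obtain ⟨s₀, _, hs₀⟩ := hMg.1
    rw [← hs₀]; exact norm_nonneg _
  have hMgpow0 : 0 ≤ Mg ^ (1 / l) := Real.rpow_nonneg hMg0 _
  -- part (i)
  have parti : ∀ s ∈ Set.Icc (0 : ℝ) 1, ‖μ s‖ ≤ C₀ * Mg ^ (1 / l) := by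
    intro s hs
    set z := μ s with hz_def
    have hz0 : z ≠ 0 := by
      intro hc; exact absurd ((hμr s hs).1) (by simp [hz_def, ← hc])
    have hzr : ‖z‖ ≤ r := (hμr s hs).2
    have hhz : m ≤ ‖h z‖ := hlow z (hzr.trans hrr₁)
    have hgabs : ‖g z‖ = ‖z‖ ^ l * ‖h z‖ := by
      rw [hg z, norm_mul, Complex.norm_cpow_real]
    have hMge : ‖g z‖ ≤ Mg := hMg.2 (Set.mem_image_of_mem _ hs)
    have hzl : ‖z‖ ^ l * m ≤ Mg := by
      calc ‖z‖ ^ l * m ≤ ‖z‖ ^ l * ‖h z‖ := by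
            apply mul_le_mul_of_nonneg_left hhz (Real.rpow_nonneg (norm_nonneg _) _)
        _ = ‖g z‖ := hgabs.symm
        _ ≤ Mg := hMge
    have hzlle : ‖z‖ ^ l ≤ Mg * (1 / m) := by
      rw [mul_one_div]
      exact (le_div_iff₀ hm0).2 hzl
    have h3 : (‖z‖ ^ l) ^ (1 / l) ≤ (Mg * (1 / m)) ^ (1 / l) :=
      Real.rpow_le_rpow (Real.rpow_nonneg (norm_nonneg _) _) hzlle (by positivity)
    have h4 : (‖z‖ ^ l) ^ (1 / l) = ‖z‖ := by
      rw [← Real.rpow_mul (norm_nonneg _), mul_one_div, div_self hl.ne',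
        Real.rpow_one]
    have h5 : (Mg * (1 / m)) ^ (1 / l) = Mg ^ (1 / l) * C₀ := by
      rw [Real.mul_rpow hMg0 (by positivity), hC₀_def]
    calc ‖z‖ = (‖z‖ ^ l) ^ (1 / l) := h4.symm
      _ ≤ (Mg * (1 / m)) ^ (1 / l) := h3
      _ = Mg ^ (1 / l) * C₀ := h5
      _ = C₀ * Mg ^ (1 / l) := mul_comm _ _
  refine ⟨fun s hs => (parti s hs).trans (mul_le_mul_of_nonneg_right hC₀C hMgpow0), ?_⟩
  set S := ⨆ s : Set.Icc (0 : ℝ) 1,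
      rugosityBracket
        (derivWithin (g ∘ μ) (Set.Icc (0 : ℝ) 1) s / (Complex.I * g (μ s))) with hS_def
  intro hyp s hs
  have hCM0 : 0 ≤ C * Mg ^ (1 / l) := by positivity
  set z := μ s with hz_def
  set u := μ' s with hu_def
  have hz0 : z ≠ 0 := by
    intro hc; exact absurd ((hμr s hs).1) (by simp [hz_def, ← hc])
  have hzr : ‖z‖ ≤ r := (hμr s hs).2
  have hhz : m ≤ ‖h z‖ := hlow z (hzr.trans hrr₁)
  have hhz0 : h z ≠ 0 := by
    intro hc; rw [hc] at hhz; simp only [norm_zero] at hhz; linarith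
  have hargz : z.arg ≠ Real.pi := by
    have h1 := (hμarg s hs).2
    intro hc; rw [hc] at h1; linarith
  have hslit : z ∈ Complex.slitPlane := Complex.mem_slitPlane_iff_arg.2 ⟨hargz, hz0⟩
  have hzball : z ∈ Metric.ball (0 : ℂ) R₀ := by
    rw [Metric.mem_ball, Complex.dist_eq, sub_zero]
    exact lt_of_le_of_lt hzr hrR
  have hhd : HasDerivAt h (deriv h z) z :=
    (hh.differentiableAt (Metric.isOpen_ball.mem_nhds hzball)).hasDerivAt
  have hpd : HasDerivAt (fun w : ℂ => w ^ (l : ℂ)) ((l : ℂ) * z ^ ((l : ℂ) - 1)) z :=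
    (Complex.hasStrictDerivAt_cpow_const hslit).hasDerivAt
  have hgd : HasDerivAt g
      ((l : ℂ) * z ^ ((l : ℂ) - 1) * h z + z ^ (l : ℂ) * deriv h z) z := by
    have hgf : g = fun w : ℂ => w ^ (l : ℂ) * h w := funext hg
    rw [hgf]; exact hpd.mul hhd
  have hcomp : HasDerivWithinAt (g ∘ μ)
      (((l : ℂ) * z ^ ((l : ℂ) - 1) * h z + z ^ (l : ℂ) * deriv h z) * u)
      (Set.Icc (0 : ℝ) 1) s :=
    hgd.comp_hasDerivWithinAt s (hμd s hs)
  have hderiv : derivWithin (g ∘ μ) (Set.Icc (0 : ℝ) 1) s =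
      ((l : ℂ) * z ^ ((l : ℂ) - 1) * h z + z ^ (l : ℂ) * deriv h z) * u :=
    hcomp.derivWithin (uniqueDiffOn_Icc_zero_one s hs)
  set δc : ℂ := z * deriv h z / ((l : ℂ) * h z) with hδc_def
  have hl0' : (l : ℂ) ≠ 0 := by exact_mod_cast hl.ne'
  have hIz : Complex.I * z ≠ 0 := mul_ne_zero Complex.I_ne_zero hz0
  have hzl0 : z ^ (l : ℂ) ≠ 0 := by
    intro hc
    have := Complex.norm_cpow_real z l
    rw [hc, norm_zero] at this
    have hzp : 0 < ‖z‖ ^ l := Real.rpow_pos_of_pos ((hμr s hs).1) l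
    rw [← this] at hzp; exact lt_irrefl _ hzp
  set w : ℂ := u / (Complex.I * z) with hw_def
  set c : ℂ := (l : ℂ) * (1 + δc) with hc_def
  have hW : derivWithin (g ∘ μ) (Set.Icc (0 : ℝ) 1) s / (Complex.I * g z) = w * c := by
    rw [hderiv, hg z, hw_def, hc_def, hδc_def]
    have hpow : z ^ ((l : ℂ) - 1) = z ^ (l : ℂ) / z := by
      rw [Complex.cpow_sub _ _ hz0, Complex.cpow_one]
    rw [hpow]
    field_simp
  -- bounds on δc
  have habsδc : ‖δc‖ = ‖z‖ * ‖deriv h z‖ / (l * ‖h z‖) := by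
    rw [hδc_def, norm_div, norm_mul, norm_mul, Complex.norm_real, Real.norm_eq_abs, abs_of_pos hl]
  have hδcb : ‖δc‖ ≤ K / (m * l) * ‖z‖ := by
    rw [habsδc]
    have hnum : ‖z‖ * ‖deriv h z‖ ≤ ‖z‖ * K :=
      mul_le_mul_of_nonneg_left (hKb z (hzr.trans hrr₁)) (norm_nonneg _)
    calc ‖z‖ * ‖deriv h z‖ / (l * ‖h z‖)
        ≤ ‖z‖ * K / (l * m) :=
          div_le_div₀ (by positivity) hnum (by positivity)
            (mul_le_mul_of_nonneg_left hhz hl.le)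
      _ = K / (m * l) * ‖z‖ := by field_simp
  have hδchalf : ‖δc‖ ≤ 1 / 2 := by
    have hzlm : ‖z‖ ≤ l * m / (2 * K) := hzr.trans hrK
    calc ‖δc‖ ≤ K / (m * l) * ‖z‖ := hδcb
      _ ≤ K / (m * l) * (l * m / (2 * K)) := by
          exact mul_le_mul_of_nonneg_left hzlm (by positivity)
      _ = 1 / 2 := by field_simp
  have hδcMg : 2 * ‖δc‖ ≤ C * Mg ^ (1 / l) := by
    have h1 := parti s hs
    have h2 : 2 * ‖δc‖ ≤ 2 * (K / (m * l)) * (C₀ * Mg ^ (1 / l)) := by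
      have h2a : 2 * ‖δc‖ ≤ 2 * (K / (m * l)) * ‖z‖ := by
        rw [mul_assoc]; linarith [hδcb]
      refine h2a.trans ?_
      exact mul_le_mul_of_nonneg_left h1 (by positivity)
    have h3 : 2 * (K / (m * l)) * (C₀ * Mg ^ (1 / l)) = C₀ * (2 * K / (m * l)) * Mg ^ (1 / l) := by
      ring
    calc 2 * ‖δc‖ ≤ C₀ * (2 * K / (m * l)) * Mg ^ (1 / l) := by rw [← h3]; exact h2
      _ ≤ C * Mg ^ (1 / l) := mul_le_mul_of_nonneg_right hKC hMgpow0
  -- nonvanishing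
  have hw0 : w ≠ 0 := div_ne_zero (hμ'0 s hs) hIz
  have h1δ : (1 : ℂ) + δc ≠ 0 := by
    intro hcc
    have hδe : δc = -1 := by linear_combination hcc
    have habs1 : ‖δc‖ = 1 := by rw [hδe]; simp
    rw [habs1] at hδchalf
    norm_num at hδchalf
  have hc0 : c ≠ 0 := mul_ne_zero hl0' h1δ
  have hwc0 : w * c ≠ 0 := mul_ne_zero hw0 hc0
  -- arg of c
  have hargc : Complex.arg c = Complex.arg (1 + δc) := Complex.arg_real_mul _ hl
  have hargcb : |Complex.arg c| ≤ 2 * ‖δc‖ := by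
    rw [hargc]; exact rug_abs_arg_one_add_le hδchalf
  have hargcCM : |Complex.arg c| ≤ C * Mg ^ (1 / l) := hargcb.trans hδcMg
  -- ENNReal extraction
  have hWt_le_S : rugosityBracket (w * c) ≤ S := by
    have := le_iSup (fun t : Set.Icc (0 : ℝ) 1 =>
      rugosityBracket
        (derivWithin (g ∘ μ) (Set.Icc (0 : ℝ) 1) t / (Complex.I * g (μ t))))
      (⟨s, hs⟩ : Set.Icc (0 : ℝ) 1)
    rw [hS_def]
    simpa [← hz_def, hW] using this
  have hS_fin : S ≤ S + ENNReal.ofReal (C * Mg ^ (1 / l)) := le_self_add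
  have hbr : rugosityBracket (w * c) < ENNReal.ofReal (Real.pi / 2) :=
    lt_of_le_of_lt (hWt_le_S.trans hS_fin) hyp
  have hargW : |Complex.arg (w * c)| < Real.pi / 2 := by
    by_contra hcc
    have heq : rugosityBracket (w * c) = ⊤ := by
      rw [rugosityBracket, if_neg hcc]
    rw [heq] at hbr
    exact not_top_lt hbr
  have hbreq : rugosityBracket (w * c) = ENNReal.ofReal |Complex.arg (w * c)| := by
    rw [rugosityBracket, if_pos hargW]
  have key : ENNReal.ofReal (|Complex.arg (w * c)| + C * Mg ^ (1 / l)) <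
      ENNReal.ofReal (Real.pi / 2) := by
    rw [ENNReal.ofReal_add (abs_nonneg _) hCM0]
    exact lt_of_le_of_lt (add_le_add (hbreq ▸ hWt_le_S) le_rfl) hyp
  have hreal : |Complex.arg (w * c)| + C * Mg ^ (1 / l) < Real.pi / 2 :=
    (ENNReal.ofReal_lt_ofReal_iff (by positivity)).1 key
  have hCMlt : C * Mg ^ (1 / l) < Real.pi / 2 := by
    have := abs_nonneg (Complex.arg (w * c)); linarith
  have hargclt : |Complex.arg c| < Real.pi / 2 := lt_of_le_of_lt hargcCM hCMlt
  -- arg of w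
  have hcinv0 : c⁻¹ ≠ 0 := inv_ne_zero hc0
  have hargcinv : Complex.arg c⁻¹ = -Complex.arg c := by
    rw [Complex.arg_inv, if_neg]
    intro hcc
    rw [hcc] at hargclt
    rw [abs_of_pos Real.pi_pos] at hargclt
    linarith [Real.pi_pos]
  have hw_eq : w = w * c * c⁻¹ := by field_simp
  have hargsum : Complex.arg (w * c) + Complex.arg c⁻¹ ∈ Set.Ioc (-Real.pi) Real.pi := by
    rw [hargcinv]
    obtain ⟨hW1, hW2⟩ := abs_lt.1 hargW
    obtain ⟨hc1, hc2⟩ := abs_lt.1 hargclt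
    constructor
    · linarith
    · linarith
  have hargw_eq : Complex.arg w = Complex.arg (w * c) - Complex.arg c := by
    conv_lhs => rw [hw_eq]
    rw [Complex.arg_mul hwc0 hcinv0 hargsum, hargcinv]
    ring
  have hargwb : |Complex.arg w| ≤ |Complex.arg (w * c)| + |Complex.arg c| := by
    rw [hargw_eq]
    exact abs_sub _ _
  have hargwb2 : |Complex.arg w| ≤ |Complex.arg (w * c)| + C * Mg ^ (1 / l) :=
    hargwb.trans (by linarith)
  have hargwlt : |Complex.arg w| < Real.pi / 2 := lt_of_le_of_lt hargwb2 hreal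
  have hwbr : rugosityBracket w = ENNReal.ofReal |Complex.arg w| := by
    rw [rugosityBracket, if_pos hargwlt]
  calc rugosityBracket (u / (Complex.I * z)) = ENNReal.ofReal |Complex.arg w| := by
        rw [← hw_def, hwbr]
    _ ≤ ENNReal.ofReal (|Complex.arg (w * c)| + C * Mg ^ (1 / l)) :=
        ENNReal.ofReal_le_ofReal hargwb2
    _ = ENNReal.ofReal |Complex.arg (w * c)| + ENNReal.ofReal (C * Mg ^ (1 / l)) :=
        ENNReal.ofReal_add (abs_nonneg _) hCM0
    _ ≤ S + ENNReal.ofReal (C * Mg ^ (1 / l)) :=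
        add_le_add (hbreq ▸ hWt_le_S) le_rfl
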